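/- The log mutation F is differentiable at every point u : I → ℝ, and its Fréchet derivative is given explicitly by: (fderiv ℝ F u) h j = h j + (v j : ℝ) * h i * (1 + Real.exp (-(u i)))⁻¹ if j ≠ i and v j ≥ 0; (fderiv ℝ F u) h j = h j - (v j : ℝ) * h i * (1 + Real.exp (u i))⁻¹ if j ≠ i and v j < 0; and (fderiv ℝ F u) h i = -(h i). -/

import Mathlib

variable {I : Type*} [Fintype I] [DecidableEq I]

/-- The log mutation at `i` with exchange entries `v`. -/
noncomputable def logMut (i : I) (v : I → ℤ) (w : I → ℝ) : I → ℝ := fun j =>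
  if j = i then -(w i)
  else if 0 ≤ v j then w j + (v j : ℝ) * Real.log (1 + Real.exp (w i))
  else w j + (v j : ℝ) * Real.log (1 + Real.exp (-(w i)))

/-- The log mutation is differentiable everywhere, with explicit Fréchet
derivative. -/
theorem logMut_fderiv (i : I) (v : I → ℤ) (hvi : v i = 0) (u : I → ℝ) :
    DifferentiableAt ℝ (logMut i v) u ∧
    ∀ (h : I → ℝ) (j : I),
      fderiv ℝ (logMut i v) u h j =
        if j = i then -(h i)
        else if 0 ≤ v j then h j + (v j : ℝ) * h i * (1 + Real.exp (-(u i)))⁻¹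
        else h j - (v j : ℝ) * h i * (1 + Real.exp (u i))⁻¹ := by
  classical
  have hpos : (0:ℝ) < 1 + Real.exp (u i) := by positivity
  have hpos' : (0:ℝ) < 1 + Real.exp (-(u i)) := by positivity
  have hproj : ∀ j, HasFDerivAt (fun w : I → ℝ => w j)
      (ContinuousLinearMap.proj j : (I → ℝ) →L[ℝ] ℝ) u :=
    fun j => by
      exact (ContinuousLinearMap.proj j : (I → ℝ) →L[ℝ] ℝ).hasFDerivAt (x := u)
  have hlog1 : HasFDerivAt (fun w : I → ℝ => Real.log (1 + Real.exp (w i)))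
      (((1 + Real.exp (-(u i)))⁻¹ : ℝ) • (ContinuousLinearMap.proj i : (I → ℝ) →L[ℝ] ℝ)) u := by
    have h1 : HasDerivAt (fun x : ℝ => 1 + Real.exp x) (Real.exp (u i)) (u i) :=
      (Real.hasDerivAt_exp _).const_add 1
    have h2 := h1.log hpos.ne'
    have heq : Real.exp (u i) / (1 + Real.exp (u i)) = (1 + Real.exp (-(u i)))⁻¹ := by
      rw [Real.exp_neg]
      have h3 : Real.exp (u i) ≠ 0 := Real.exp_ne_zero _
      field_simp
      ring
    rw [heq] at h2
    exact h2.comp_hasFDerivAt u (hproj i)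
  have hlog2 : HasFDerivAt (fun w : I → ℝ => Real.log (1 + Real.exp (-(w i))))
      ((-(1 + Real.exp (u i))⁻¹ : ℝ) • (ContinuousLinearMap.proj i : (I → ℝ) →L[ℝ] ℝ)) u := by
    have h1 : HasDerivAt (fun x : ℝ => 1 + Real.exp (-x)) (-Real.exp (-(u i))) (u i) := by
      have := ((Real.hasDerivAt_exp (-(u i))).comp (u i) (hasDerivAt_neg (u i))).const_add 1
      simpa [Function.comp] using this
    have h2 := h1.log hpos'.ne'
    have heq : -Real.exp (-(u i)) / (1 + Real.exp (-(u i))) = -(1 + Real.exp (u i))⁻¹ := by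
      rw [Real.exp_neg]
      have h3 : Real.exp (u i) ≠ 0 := Real.exp_ne_zero _
      field_simp
      ring
    rw [heq] at h2
    exact h2.comp_hasFDerivAt u (hproj i)
  set L : (I → ℝ) →L[ℝ] (I → ℝ) := ContinuousLinearMap.pi (fun j =>
    if j = i then -(ContinuousLinearMap.proj i : (I → ℝ) →L[ℝ] ℝ)
    else if 0 ≤ v j then
      ContinuousLinearMap.proj j +
        ((v j : ℝ) * (1 + Real.exp (-(u i)))⁻¹) • ContinuousLinearMap.proj i
    else
      ContinuousLinearMap.proj j -
        ((v j : ℝ) * (1 + Real.exp (u i))⁻¹) • ContinuousLinearMap.proj i) with hL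
  have hF : HasFDerivAt (logMut i v) L u := by
    rw [hL, hasFDerivAt_pi]
    intro j
    by_cases hj : j = i
    · subst hj
      simp only [logMut, if_pos rfl]
      exact (hproj j).neg
    · by_cases hv : 0 ≤ v j
      · simp only [logMut, if_neg hj, if_pos hv]
        rw [mul_comm ((v j : ℝ)), ← smul_smul]
        have := (hproj j).add (hlog1.const_mul ((v j : ℝ)))
        rw [smul_comm]
        exact this
      · simp only [logMut, if_neg hj, if_neg hv]
        have key : (ContinuousLinearMap.proj j : (I → ℝ) →L[ℝ] ℝ) -
            ((v j : ℝ) * (1 + Real.exp (u i))⁻¹) • ContinuousLinearMap.proj i =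
            ContinuousLinearMap.proj j +
            (v j : ℝ) • ((-(1 + Real.exp (u i))⁻¹ : ℝ) • ContinuousLinearMap.proj i) := by
          ext w
          simp [smul_smul]
          ring
        rw [key]
        exact (hproj j).add (hlog2.const_mul ((v j : ℝ)))
  refine ⟨hF.differentiableAt, ?_⟩
  intro h j
  rw [hF.fderiv]
  by_cases hj : j = i
  · subst hj
    simp [hL]
  · by_cases hv : 0 ≤ v j
    · simp [hL, hj, hv]
      ring
    · simp [hL, hj, hv]
      ring
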